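/- The integral ∫_0^1 ln[(cos(π/16) − x)² + sin²(π/16)] dx is strictly less than −1.488. -/

import Mathlib

open Real intervalIntegral

set_option maxHeartbeats 1000000

theorem log_integral_bound :
    (∫ x in (0:ℝ)..1,
      Real.log ((Real.cos (Real.pi / 16) - x)^2 + (Real.sin (Real.pi / 16))^2)) < -1.488 := by
  set c : ℝ := Real.cos (Real.pi / 16) with hc
  set s : ℝ := Real.sin (Real.pi / 16) with hs
  have pi_pos := Real.pi_pos
  have hs_pos : 0 < s := Real.sin_pos_of_pos_of_lt_pi (by positivity) (by linarith)
  have hg : ∀ x : ℝ, 0 < (x - c)^2 + s^2 := fun x => by positivity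
  -- FTC
  have hder : ∀ x : ℝ, HasDerivAt
      (fun y : ℝ => (y - c) * Real.log ((y - c)^2 + s^2) - 2*y
        + 2*s*Real.arctan ((y - c)/s))
      (Real.log ((c - x)^2 + s^2)) x := by
    intro x
    have h1 : HasDerivAt (fun y : ℝ => y - c) 1 x := (hasDerivAt_id x).sub_const c
    have h2 : HasDerivAt (fun y : ℝ => (y - c)^2 + s^2) (2*(x - c)) x := by
      have := (h1.pow 2).add_const (s^2)
      simpa [mul_comm] using this
    have h3 : HasDerivAt (fun y : ℝ => Real.log ((y - c)^2 + s^2))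
        ((2*(x - c))/((x - c)^2 + s^2)) x := h2.log (ne_of_gt (hg x))
    have h4 := h1.mul h3
    have h5 : HasDerivAt (fun y : ℝ => (y - c)/s) (1/s) x := h1.div_const s
    have h6 : HasDerivAt (fun y : ℝ => Real.arctan ((y - c)/s))
        (1/(1 + ((x - c)/s)^2) * (1/s)) x :=
      by have := (Real.hasDerivAt_arctan ((x - c)/s)).comp x h5; exact this
    have h7 := (h4.sub ((hasDerivAt_id x).const_mul 2)).add (h6.const_mul (2*s))
    convert h7 using 1
    · rfl
    · rfl
    · rfl
    have hgx := hg x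
    have hcx : (c - x)^2 = (x - c)^2 := by ring
    rw [hcx]
    field_simp
    ring
  have hcont : Continuous fun x : ℝ => Real.log ((c - x)^2 + s^2) := by
    apply Continuous.log
    · fun_prop
    · intro x
      have : (c - x)^2 = (x - c)^2 := by ring
      rw [this]; exact ne_of_gt (hg x)
  have hint : (∫ x in (0:ℝ)..1, Real.log ((c - x)^2 + s^2))
      = ((1 - c) * Real.log ((1 - c)^2 + s^2) - 2*1 + 2*s*Real.arctan ((1 - c)/s))
        - ((0 - c) * Real.log ((0 - c)^2 + s^2) - 2*0 + 2*s*Real.arctan ((0 - c)/s)) := by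
    exact intervalIntegral.integral_eq_sub_of_hasDerivAt (fun x _ => hder x)
      (hcont.intervalIntegrable 0 1)
  rw [hint]
  -- trig identities
  have hpyth : s^2 + c^2 = 1 := Real.sin_sq_add_cos_sq _
  have hc1 : (0 - c)^2 + s^2 = 1 := by linear_combination hpyth
  have h2c : (1 - c)^2 + s^2 = 2 - 2*c := by linear_combination hpyth
  have hs32 : 0 < Real.sin (Real.pi/32) :=
    Real.sin_pos_of_pos_of_lt_pi (by positivity) (by linarith)
  have hc32 : 0 < Real.cos (Real.pi/32) :=
    Real.cos_pos_of_mem_Ioo ⟨by linarith, by linarith⟩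
  have hdouble : Real.pi/16 = 2 * (Real.pi/32) := by ring
  have hsin2 : s = 2 * Real.sin (Real.pi/32) * Real.cos (Real.pi/32) := by
    rw [hs, hdouble, Real.sin_two_mul]
  have hcos2 : c = 2 * Real.cos (Real.pi/32)^2 - 1 := by
    rw [hc, hdouble, Real.cos_two_mul]
  have hp32 : Real.sin (Real.pi/32)^2 + Real.cos (Real.pi/32)^2 = 1 :=
    Real.sin_sq_add_cos_sq _
  have harg1 : (1 - c)/s = Real.tan (Real.pi/32) := by
    rw [Real.tan_eq_sin_div_cos, hsin2, hcos2]
    rw [div_eq_div_iff (by positivity) (ne_of_gt hc32)]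
    linear_combination (-2*Real.cos (Real.pi/32)) * hp32
  have harc1 : Real.arctan ((1 - c)/s) = Real.pi/32 := by
    rw [harg1, Real.arctan_tan (by linarith) (by linarith)]
  have harg2 : c/s = Real.tan (7*Real.pi/16) := by
    rw [Real.tan_eq_sin_div_cos,
      show (7*Real.pi/16) = Real.pi/2 - Real.pi/16 by ring,
      Real.sin_pi_div_two_sub, Real.cos_pi_div_two_sub]
  have harc2 : Real.arctan ((0 - c)/s) = -(7*Real.pi/16) := by
    rw [show (0 - c)/s = -(c/s) by ring, Real.arctan_neg, harg2,
      Real.arctan_tan (by linarith) (by linarith)]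
  rw [hc1, Real.log_one, harc1, harc2, h2c]
  -- now: (1-c) * log (2-2c) - 2 + 2s(π/32) - (0 + 2s(-(7π/16))) < -1.488
  -- numeric bounds
  have hcval : c = Real.sqrt (2 + Real.sqrt (2 + Real.sqrt 2)) / 2 := Real.cos_pi_div_sixteen
  have hsval : s = Real.sqrt (2 - Real.sqrt (2 + Real.sqrt 2)) / 2 := Real.sin_pi_div_sixteen
  set A : ℝ := Real.sqrt 2 with hA
  have hA0 : 0 ≤ A := Real.sqrt_nonneg _
  have hA2 : A^2 = 2 := Real.sq_sqrt (by norm_num)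
  have hAlo : 1.4142135623730 < A := by
    rw [hA, show (1.4142135623730:ℝ) < Real.sqrt 2 ↔ _ from Real.lt_sqrt (by norm_num)]; norm_num
  have hAhi : A < 1.4142135623731 := by
    rw [hA, Real.sqrt_lt' (by norm_num)]; norm_num
  set B : ℝ := Real.sqrt (2 + A) with hB
  have hB0 : 0 ≤ B := Real.sqrt_nonneg _
  have hB2 : B^2 = 2 + A := Real.sq_sqrt (by linarith)
  have hBlo : 1.8477590650225 < B := by
    rw [hB, Real.lt_sqrt (by norm_num)]; norm_num; linarith
  have hBhi : B < 1.8477590650226 := by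
    rw [hB, Real.sqrt_lt' (by norm_num)]; norm_num; linarith
  set D : ℝ := Real.sqrt (2 + B) with hD
  have hD0 : 0 ≤ D := Real.sqrt_nonneg _
  have hD2 : D^2 = 2 + B := Real.sq_sqrt (by linarith)
  have hDlo : 1.9615705608064 < D := by
    rw [hD, Real.lt_sqrt (by norm_num)]; norm_num; linarith
  have hDhi : D < 1.9615705608065 := by
    rw [hD, Real.sqrt_lt' (by norm_num)]; norm_num; linarith
  set S2 : ℝ := Real.sqrt (2 - B) with hS2
  have hS20 : 0 ≤ S2 := Real.sqrt_nonneg _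
  have hS22 : S2^2 = 2 - B := Real.sq_sqrt (by linarith)
  have hS2lo : 0.3901806440322 < S2 := by
    rw [hS2, Real.lt_sqrt (by norm_num)]; norm_num; linarith
  have hS2hi : S2 < 0.3901806440324 := by
    rw [hS2, Real.sqrt_lt' (by norm_num)]; norm_num; linarith
  have hcD : c = D/2 := by rw [hcval]
  have hsS : s = S2/2 := by rw [hsval]
  -- log bound : log (2 - 2c) ≤ 64*(1.0032366-1) - 5*log 2, with 2-2c ≤ u_hi
  have hu_pos : (0:ℝ) < 2 - 2*c := by rw [hcD]; linarith
  have hu_le : 2 - 2*c ≤ 0.0384294391936 := by rw [hcD]; linarith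
  have hlog1 : Real.log (2 - 2*c) ≤ Real.log 0.0384294391936 := by
    rw [Real.log_le_log_iff hu_pos (by norm_num)]
    exact hu_le
  have hlogu : Real.log 0.0384294391936
      = Real.log 1.2297420541952 - 5 * Real.log 2 := by
    rw [show (0.0384294391936:ℝ) = 1.2297420541952 / 2^5 by norm_num,
      Real.log_div (by norm_num) (by norm_num), Real.log_pow]
    push_cast; ring
  have hlogy : Real.log 1.2297420541952 ≤ 64 * 0.0032366 := by
    have h1 : (1.2297420541952:ℝ) ≤ 1.0032366^64 := by norm_num
    have h2 : Real.log 1.2297420541952 ≤ Real.log (1.0032366^64) := by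
      rw [Real.log_le_log_iff (by norm_num) (by positivity)]
      exact h1
    rw [Real.log_pow] at h2
    have h3 : Real.log 1.0032366 ≤ 1.0032366 - 1 :=
      Real.log_le_sub_one_of_pos (by norm_num)
    calc Real.log 1.2297420541952 ≤ 64 * Real.log 1.0032366 := by push_cast at h2 ⊢; linarith
      _ ≤ 64 * 0.0032366 := by linarith
  have hlog2 := Real.log_two_gt_d9
  have hlogfin : Real.log (2 - 2*c) ≤ -3.2585924015 := by
    rw [hlogu] at hlog1
    linarith
  have hpi : Real.pi < 3.141593 := Real.pi_lt_d6
  -- final assembly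
  have hclo : 0.9807852804032 < c := by rw [hcD]; linarith
  have hchi : c < 0.98078528040325 := by rw [hcD]; linarith
  have hshi : s < 0.1950903220162 := by rw [hsS]; linarith
  have hslo : 0 < s := hs_pos
  have hprod : (1 - c) * Real.log (2 - 2*c) ≤ (1 - 0.98078528040325) * (-3.2585924015) := by
    have h1 : (1 - c) * Real.log (2 - 2*c) ≤ (1 - c) * (-3.2585924015 : ℝ) := by
      apply mul_le_mul_of_nonneg_left hlogfin (by linarith)
    have h2 : (1 - c) * (-3.2585924015 : ℝ) ≤ (1 - 0.98078528040325) * (-3.2585924015) := by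
      linarith [hchi]
    linarith
  have hsp : s * Real.pi < 0.1950903220162 * 3.141593 :=
    mul_lt_mul'' hshi hpi (le_of_lt hs_pos) (by linarith)
  norm_num at hprod hsp ⊢
  linarith [hprod, hsp]
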